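/- Let G be a Cameron–Walker graph in standard form, with n = |V(G)|, α(G) the independence number, i(G) the minimum size of an independent dominating set, and reg := m + Σ_j t_j. Then n < i(G) + 2α(G). (Combinatorial form of |V(G)| < depth + 2·dim.) -/

import Mathlib

/-- A finite set of vertices is independent in `G` if no two of its members are adjacent. -/
def SimpleGraph.IsIndepFinset {V : Type*} (G : SimpleGraph V) (A : Finset V) : Prop :=
  ∀ u ∈ A, ∀ v ∈ A, ¬ G.Adj u v

/-- `A` is an independent dominating set of `G`: `A` is independent and
`A ∪ N_G(A) = V(G)`, i.e. every vertex is in `A` or adjacent to a member of `A`. -/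
def SimpleGraph.IsIndepDomFinset {V : Type*} (G : SimpleGraph V) (A : Finset V) : Prop :=
  G.IsIndepFinset A ∧ ∀ v : V, v ∈ A ∨ ∃ u ∈ A, G.Adj u v

/-- The vertex set of a Cameron–Walker graph in standard form:
the `vᵢ` (`i : Fin m`), the `w_j` (`j : Fin p`), the `sᵢ` leaves attached to `vᵢ`,
and the two extra vertices of each of the `t_j` pendant triangles attached to `w_j`. -/
abbrev CWVert (m p : ℕ) (s : Fin m → ℕ) (t : Fin p → ℕ) : Type :=
  (Fin m) ⊕ (Fin p) ⊕ (Σ i : Fin m, Fin (s i)) ⊕ (Σ j : Fin p, Fin (t j) × Fin 2)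

/-- The Cameron–Walker graph in standard form: a bipartite graph between the `vᵢ`
and the `w_j` with edge relation `E`, together with `sᵢ` pendant leaves at each `vᵢ`
and `t_j` pendant triangles at each `w_j`. -/
def CWGraph (m p : ℕ) (E : Fin m → Fin p → Prop) (s : Fin m → ℕ) (t : Fin p → ℕ) :
    SimpleGraph (CWVert m p s t) :=
  SimpleGraph.fromRel (fun u v =>
    match u, v with
    | Sum.inl i, Sum.inr (Sum.inl j) => E i j
    | Sum.inl i, Sum.inr (Sum.inr (Sum.inl ⟨i', _⟩)) => i = i'
    | Sum.inr (Sum.inl j), Sum.inr (Sum.inr (Sum.inr ⟨j', _⟩)) => j = j'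
    | Sum.inr (Sum.inr (Sum.inr ⟨j, l, _⟩)), Sum.inr (Sum.inr (Sum.inr ⟨j', l', _⟩)) =>
        j = j' ∧ HEq l l'
    | _, _ => False)

/-- The bipartite part of the Cameron–Walker graph, as a graph on `{v₁,…,vₘ} ∪ {w₁,…,w_p}`. -/
def CWBip (m p : ℕ) (E : Fin m → Fin p → Prop) : SimpleGraph ((Fin m) ⊕ (Fin p)) :=
  SimpleGraph.fromRel (fun u v =>
    match u, v with
    | Sum.inl i, Sum.inr j => E i j
    | _, _ => False)

namespace CWaux

variable {m p : ℕ} {E : Fin m → Fin p → Prop} {s : Fin m → ℕ} {t : Fin p → ℕ}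

abbrev vL (i : Fin m) : CWVert m p s t := Sum.inl i
abbrev vW (j : Fin p) : CWVert m p s t := Sum.inr (Sum.inl j)
abbrev vS (i : Fin m) (k : Fin (s i)) : CWVert m p s t := Sum.inr (Sum.inr (Sum.inl ⟨i, k⟩))
abbrev vT (j : Fin p) (l : Fin (t j)) (e : Fin 2) : CWVert m p s t :=
  Sum.inr (Sum.inr (Sum.inr ⟨j, (l, e)⟩))

lemma adjS (u : CWVert m p s t) (i : Fin m) (k : Fin (s i))
    (h : (CWGraph m p E s t).Adj u (vS i k)) : u = vL i := by
  obtain ⟨hne, h | h⟩ := h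
  · rcases u with i' | j' | ⟨i', k'⟩ | ⟨j', l', e'⟩ <;> simp_all
  · rcases u with i' | j' | ⟨i', k'⟩ | ⟨j', l', e'⟩ <;> simp_all

lemma adjT (u : CWVert m p s t) (j : Fin p) (l : Fin (t j)) (e : Fin 2)
    (h : (CWGraph m p E s t).Adj u (vT j l e)) :
    u = vW j ∨ ∃ e', u = vT j l e' := by
  obtain ⟨hne, h | h⟩ := h
  · rcases u with i' | j' | ⟨i', k'⟩ | ⟨j', l', e'⟩ <;> simp_all
    obtain ⟨rfl, hl⟩ := h
    cases eq_of_heq hl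
    fin_cases e' <;> simp
  · rcases u with i' | j' | ⟨i', k'⟩ | ⟨j', l', e'⟩ <;> simp_all
    obtain ⟨rfl, hl⟩ := h
    cases eq_of_heq hl
    fin_cases e' <;> simp

lemma adjW (u : CWVert m p s t) (j : Fin p)
    (h : (CWGraph m p E s t).Adj u (vW j)) :
    (∃ i, u = vL i) ∨ ∃ l e, u = vT j l e := by
  obtain ⟨hne, h | h⟩ := h
  · rcases u with i' | j' | ⟨i', k'⟩ | ⟨j', l', e'⟩
    · exact Or.inl ⟨i', rfl⟩
    · simp_all
    · simp_all
    · simp_all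
  · rcases u with i' | j' | ⟨i', k'⟩ | ⟨j', l', e'⟩
    · exact Or.inl ⟨i', rfl⟩
    · simp_all
    · simp_all
    · right
      simp only [CWGraph] at h
      cases h
      exact ⟨l', e', rfl⟩

lemma adj_SL (E : Fin m → Fin p → Prop) (i : Fin m) (k : Fin (s i)) :
    (CWGraph m p E s t).Adj (vS i k) (vL i) := by
  refine ⟨by simp, Or.inr ?_⟩
  simp [CWGraph]

lemma adj_WT (E : Fin m → Fin p → Prop) (j : Fin p) (l : Fin (t j)) (e : Fin 2) :
    (CWGraph m p E s t).Adj (vW j) (vT j l e) := by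
  refine ⟨by simp, Or.inl ?_⟩
  simp [CWGraph]


def f0 (m p : ℕ) (s : Fin m → ℕ) (t : Fin p → ℕ) :
    (Σ i : Fin m, Fin (s i)) ⊕ Fin p → CWVert m p s t :=
  Sum.elim (fun x => vS x.1 x.2) (fun j => vW j)

lemma f0_inj : Function.Injective (f0 m p s t) := by
  rintro (⟨i, k⟩ | j) (⟨i', k'⟩ | j') h <;> simp_all [f0]

def fB (m p : ℕ) (s : Fin m → ℕ) (t : Fin p → ℕ) :
    (Σ i : Fin m, Fin (s i)) ⊕ ((Σ j : Fin p, Fin (t j)) ⊕ {j : Fin p // t j = 0}) →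
      CWVert m p s t :=
  Sum.elim (fun x => vS x.1 x.2) (Sum.elim (fun x => vT x.1 x.2 0) (fun x => vW x.1))

lemma fB_inj : Function.Injective (fB m p s t) := by
  rintro (⟨i, k⟩ | (⟨j, l⟩ | ⟨j, hj⟩)) (⟨i', k'⟩ | (⟨j', l'⟩ | ⟨j', hj'⟩)) h <;>
    simp_all [fB]
  obtain ⟨rfl, h2⟩ := h
  have := eq_of_heq h2
  simp_all

end CWaux

open CWaux

/-- for a Cameron–Walker graph `G` in standard form on `n` vertices,
`n < i(G) + 2α(G)`, where `i(G)` is the least size of an independent dominating set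
and `α(G)` is the independence number. -/
theorem stmt_17 (m p : ℕ) (hm : 1 ≤ m) (hp : 1 ≤ p) (E : Fin m → Fin p → Prop)
    (s : Fin m → ℕ) (t : Fin p → ℕ) (hs : ∀ i, 1 ≤ s i)
    (hconn : (CWBip m p E).Connected) :
    Fintype.card (CWVert m p s t) <
      sInf {k : ℕ | ∃ A : Finset (CWVert m p s t),
          (CWGraph m p E s t).IsIndepDomFinset A ∧ A.card = k}
      + 2 * sSup {k : ℕ | ∃ A : Finset (CWVert m p s t),
          (CWGraph m p E s t).IsIndepFinset A ∧ A.card = k} := by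
  classical
  set S := ∑ i, s i with hS
  set T := ∑ j, t j with hT
  set q := Fintype.card {j : Fin p // 0 < t j} with hq
  set z := Fintype.card {j : Fin p // t j = 0} with hz
  -- cardinality of the vertex set
  have hcard : Fintype.card (CWVert m p s t) = m + p + S + 2 * T := by
    have h2 : 2 * ∑ j, t j = ∑ j, t j * 2 := by rw [mul_comm, Finset.sum_mul]
    simp [Fintype.card_sigma, hS, hT, h2]
    ring
  -- q + z = p
  have hqz : q + z = p := by
    have hcongr : Fintype.card {j : Fin p // 0 < t j}
        = Fintype.card {j : Fin p // ¬ t j = 0} :=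
      Fintype.card_congr (Equiv.subtypeEquivRight fun j => Nat.pos_iff_ne_zero)
    have h1 : Fintype.card {j : Fin p // t j = 0} ≤ p := by
      simpa using Fintype.card_subtype_le (fun j : Fin p => t j = 0)
    rw [hq, hz, hcongr, Fintype.card_subtype_compl]
    simp
    omega
  -- m ≤ S
  have hmS : m ≤ S := by
    calc m = ∑ _i : Fin m, 1 := by simp
    _ ≤ S := Finset.sum_le_sum fun i _ => hs i
  -- the dominating set A₀ : all leaves and all w's
  let A0 : Finset (CWVert m p s t) := Finset.univ.image (f0 m p s t)
  have hA0mem : ∀ u ∈ A0, (∃ i k, u = vS i k) ∨ ∃ j, u = vW j := by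
    intro u hu
    obtain ⟨a, -, rfl⟩ := Finset.mem_image.mp hu
    rcases a with ⟨i, k⟩ | j
    · exact Or.inl ⟨i, k, rfl⟩
    · exact Or.inr ⟨j, rfl⟩
  have hA0dom : (CWGraph m p E s t).IsIndepDomFinset A0 := by
    constructor
    · intro u hu v hv hadj
      rcases hA0mem u hu with ⟨i', k', rfl⟩ | ⟨j', rfl⟩ <;>
        rcases hA0mem v hv with ⟨i, k, rfl⟩ | ⟨j, rfl⟩
      · have h := adjS _ i k hadj; simp at h
      · rcases adjW _ j hadj with ⟨i, h⟩ | ⟨l, e, h⟩ <;> simp at h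
      · have h := adjS _ i k hadj; simp at h
      · rcases adjW _ j hadj with ⟨i, h⟩ | ⟨l, e, h⟩ <;> simp at h
    · intro v
      rcases v with i | j | ⟨i, k⟩ | ⟨j, l, e⟩
      · exact Or.inr ⟨vS i ⟨0, hs i⟩, Finset.mem_image.mpr ⟨Sum.inl ⟨i, ⟨0, hs i⟩⟩, by simp, rfl⟩,
          adj_SL E i ⟨0, hs i⟩⟩
      · exact Or.inl (Finset.mem_image.mpr ⟨Sum.inr j, by simp, rfl⟩)
      · exact Or.inl (Finset.mem_image.mpr ⟨Sum.inl ⟨i, k⟩, by simp, rfl⟩)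
      · exact Or.inr ⟨vW j, Finset.mem_image.mpr ⟨Sum.inr j, by simp, rfl⟩, adj_WT E j l e⟩
  -- the big independent set B
  let B : Finset (CWVert m p s t) := Finset.univ.image (fB m p s t)
  have hBmem : ∀ u ∈ B, (∃ i k, u = vS i k) ∨ (∃ j l, u = vT j l 0) ∨
      ∃ j, t j = 0 ∧ u = vW j := by
    intro u hu
    obtain ⟨a, -, rfl⟩ := Finset.mem_image.mp hu
    rcases a with ⟨i, k⟩ | (⟨j, l⟩ | ⟨j, hj⟩)
    · exact Or.inl ⟨i, k, rfl⟩
    · exact Or.inr (Or.inl ⟨j, l, rfl⟩)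
    · exact Or.inr (Or.inr ⟨j, hj, rfl⟩)
  have hBindep : (CWGraph m p E s t).IsIndepFinset B := by
    intro u hu v hv hadj
    rcases hBmem u hu with ⟨i', k', rfl⟩ | (⟨j', l', rfl⟩ | ⟨j', hj', rfl⟩) <;>
      rcases hBmem v hv with ⟨i, k, rfl⟩ | (⟨j, l, rfl⟩ | ⟨j, hj, rfl⟩)
    · have h := adjS _ i k hadj; simp at h
    · rcases adjT _ j l 0 hadj with h | ⟨e', h⟩ <;> simp at h
    · rcases adjW _ j hadj with ⟨i, h⟩ | ⟨l, e, h⟩ <;> simp at h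
    · have h := adjS _ i k hadj; simp at h
    · rcases adjT _ j l 0 hadj with h | ⟨e', h⟩
      · simp at h
      · simp only [Sum.inr.injEq, Sigma.mk.inj_iff] at h
        obtain ⟨rfl, h2⟩ := h
        have h3 := eq_of_heq h2
        have hl : l' = l := congrArg Prod.fst h3
        have he : (0 : Fin 2) = e' := congrArg Prod.snd h3
        subst hl
        exact hadj.ne rfl
    · rcases adjW _ j hadj with ⟨i, h⟩ | ⟨l, e, h⟩
      · simp at h
      · have hjj : j' = j := by
          simp only [Sum.inr.injEq, Sigma.mk.inj_iff] at h
          exact h.1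
        subst hjj
        have := l'.isLt
        omega
    · have h := adjS _ i k hadj; simp at h
    · rcases adjT _ j l 0 hadj with h | ⟨e', h⟩
      · have hjj : j' = j := by simpa using h
        subst hjj
        have := l.isLt
        omega
      · simp at h
    · rcases adjW _ j hadj with ⟨i, h⟩ | ⟨l, e, h⟩ <;> simp at h
  have hBcard : B.card = S + T + z := by
    rw [Finset.card_image_of_injective _ fB_inj, Finset.card_univ]
    simp [Fintype.card_sigma, hS, hT, hz]
    ring
  -- lower bound for independent dominating sets
  have hlower : ∀ A : Finset (CWVert m p s t),
      (CWGraph m p E s t).IsIndepDomFinset A → m + q ≤ A.card := by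
    rintro A ⟨hind, hdom⟩
    let β : CWVert m p s t → Fin m ⊕ Fin p := fun v =>
      match v with
      | Sum.inl i => Sum.inl i
      | Sum.inr (Sum.inl j) => Sum.inr j
      | Sum.inr (Sum.inr (Sum.inl ⟨i, _⟩)) => Sum.inl i
      | Sum.inr (Sum.inr (Sum.inr ⟨j, _⟩)) => Sum.inr j
    let idx : Fin m ⊕ {j : Fin p // 0 < t j} → Fin m ⊕ Fin p :=
      Sum.elim Sum.inl (fun x => Sum.inr x.1)
    have key : ∀ x : Fin m ⊕ {j : Fin p // 0 < t j}, ∃ u ∈ A, β u = idx x := by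
      rintro (i | ⟨j, hj⟩)
      · rcases hdom (vS i ⟨0, hs i⟩) with h | ⟨u, hu, hadj⟩
        · exact ⟨_, h, rfl⟩
        · exact ⟨u, hu, by rw [adjS u i _ hadj]; rfl⟩
      · rcases hdom (vT j ⟨0, hj⟩ 0) with h | ⟨u, hu, hadj⟩
        · exact ⟨_, h, rfl⟩
        · refine ⟨u, hu, ?_⟩
          rcases adjT u j _ 0 hadj with rfl | ⟨e', rfl⟩ <;> rfl
    choose φ hφA hφβ using key
    have hinj : Function.Injective φ := by
      intro a b hab
      have hii : idx a = idx b := by rw [← hφβ a, ← hφβ b, hab]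
      rcases a with i | ⟨j, hj⟩ <;> rcases b with i' | ⟨j', hj'⟩
      · have : i = i' := by simpa [idx] using hii
        rw [this]
      · exact absurd hii (by simp [idx])
      · exact absurd hii (by simp [idx])
      · have : j = j' := by simpa [idx] using hii
        subst this; rfl
    calc m + q = Fintype.card (Fin m ⊕ {j : Fin p // 0 < t j}) := by simp [hq]
    _ = (Finset.univ.image φ).card := by
        rw [Finset.card_image_of_injective _ hinj, Finset.card_univ]
    _ ≤ A.card := Finset.card_le_card (by
        intro u hu
        obtain ⟨a, -, rfl⟩ := Finset.mem_image.mp hu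
        exact hφA a)
  -- put everything together
  have hiS_ne : {k : ℕ | ∃ A : Finset (CWVert m p s t),
      (CWGraph m p E s t).IsIndepDomFinset A ∧ A.card = k}.Nonempty := ⟨A0.card, A0, hA0dom, rfl⟩
  have hi : m + q ≤ sInf {k : ℕ | ∃ A : Finset (CWVert m p s t),
      (CWGraph m p E s t).IsIndepDomFinset A ∧ A.card = k} :=
    le_csInf hiS_ne (by rintro k ⟨A, hA, rfl⟩; exact hlower A hA)
  have hbdd : BddAbove {k : ℕ | ∃ A : Finset (CWVert m p s t),
      (CWGraph m p E s t).IsIndepFinset A ∧ A.card = k} :=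
    ⟨Fintype.card (CWVert m p s t), by
      rintro k ⟨A, -, rfl⟩; exact A.card_le_univ.trans_eq Finset.card_univ⟩
  have ha : S + T + z ≤ sSup {k : ℕ | ∃ A : Finset (CWVert m p s t),
      (CWGraph m p E s t).IsIndepFinset A ∧ A.card = k} :=
    hBcard ▸ le_csSup hbdd ⟨B, hBindep, rfl⟩
  omega
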